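/- Let (φ_i)_{i≥1} be a sequence in SL(2,ℝ), φ_i = [[a_i, b_i],[c_i, d_i]], with c_i ≠ 0 for all i, and suppose the sequence (1/n)∑_{i=1}^n log|c_i| is bounded from below. Then the set of periods {τ ∈ (0, ∞) : the sequence (f^{(k)}(τ))_{k≥1} is bounded} has finite Lebesgue measure. -/

import Mathlib

open MeasureTheory

/-- The matrix `h^t = [[1, t],[0, 1]] ∈ SL(2,ℝ)`. -/
def hMat (t : ℝ) : Matrix (Fin 2) (Fin 2) ℝ := !![1, t; 0, 1]

/-- The kicked evolution `f^{(k)}(τ) = φ_k h^τ φ_{k-1} h^τ ⋯ φ_1 h^τ`. -/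
def kickedEvol (φ : ℕ → Matrix (Fin 2) (Fin 2) ℝ) (τ : ℝ) :
    ℕ → Matrix (Fin 2) (Fin 2) ℝ
  | 0 => 1
  | k + 1 => φ (k + 1) * hMat τ * kickedEvol φ τ k

/-- A sequence of matrices is bounded if all its entries are uniformly bounded
(equivalently, it lies in a compact subset). -/
def MatSeqBounded (f : ℕ → Matrix (Fin 2) (Fin 2) ℝ) : Prop :=
  ∃ C : ℝ, ∀ k : ℕ, 1 ≤ k → ∀ i j : Fin 2, |f k i j| ≤ C

section Aux
open Real Set Polynomial


lemma logIntOn_pos (u : ℝ) (hu : u ≤ 1) : IntegrableOn Real.log (Set.Ioc 0 u) := by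
  rcases le_or_gt u 0 with h | h
  · rw [Set.Ioc_eq_empty (by linarith)]; exact integrableOn_empty
  have h1 : IntegrableOn (fun x => -Real.log x) (Set.Ioc 0 u) := by
    apply intervalIntegral.integrableOn_deriv_of_nonneg (g := fun x => x - x * Real.log x)
    · exact (continuous_id.sub Real.continuous_mul_log).continuousOn
    · intro x hx
      have hx0 : x ≠ 0 := ne_of_gt hx.1
      have := (hasDerivAt_id x).sub (Real.hasDerivAt_mul_log hx0)
      exact this.congr_deriv (by ring)
    · intro x hx
      have : Real.log x ≤ 0 := Real.log_nonpos hx.1.le (by linarith [hx.2])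
      linarith
  exact integrable_neg_iff.mp h1

lemma logIntOn_neg (v : ℝ) (hv : -1 ≤ v) : IntegrableOn Real.log (Set.Ioc v 0) := by
  rcases le_or_gt 0 v with h | h
  · rw [Set.Ioc_eq_empty (by intro hh; linarith)]; exact integrableOn_empty
  have h1 : IntegrableOn (fun x => -Real.log x) (Set.Ioc v 0) := by
    apply intervalIntegral.integrableOn_deriv_of_nonneg (g := fun x => x - x * Real.log x)
    · exact (continuous_id.sub Real.continuous_mul_log).continuousOn
    · intro x hx
      have hx0 : x ≠ 0 := ne_of_lt hx.2
      have := (hasDerivAt_id x).sub (Real.hasDerivAt_mul_log hx0)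
      exact this.congr_deriv (by ring)
    · intro x hx
      have : Real.log x ≤ 0 := by
        rw [← Real.log_neg_eq_log]
        exact Real.log_nonpos (by linarith [hx.2]) (by linarith [hx.1])
      linarith
  exact integrable_neg_iff.mp h1

lemma logIntOn_away (a b : ℝ) (hab : (0:ℝ) ∉ Set.Icc a b) : IntegrableOn Real.log (Set.Icc a b) := by
  apply ContinuousOn.integrableOn_compact isCompact_Icc
  refine Real.continuousOn_log.mono ?_
  intro x hx hx0
  rw [Set.mem_singleton_iff] at hx0
  exact hab (hx0 ▸ hx)

lemma logIntOn (a b : ℝ) : IntegrableOn Real.log (Set.Ioc a b) := by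
  have hsub : Set.Ioc a b ⊆ Set.Icc a (-1) ∪ (Set.Ioc (-1:ℝ) 0 ∪ (Set.Ioc (0:ℝ) 1 ∪ Set.Icc 1 b)) := by
    intro x hx
    rcases le_or_gt x (-1) with h1 | h1
    · exact Or.inl ⟨hx.1.le, h1⟩
    rcases le_or_gt x 0 with h2 | h2
    · exact Or.inr (Or.inl ⟨h1, h2⟩)
    rcases le_or_gt x 1 with h3 | h3
    · exact Or.inr (Or.inr (Or.inl ⟨h2, h3⟩))
    · exact Or.inr (Or.inr (Or.inr ⟨h3.le, hx.2⟩))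
  have hI : IntegrableOn Real.log (Set.Icc a (-1) ∪ (Set.Ioc (-1:ℝ) 0 ∪ (Set.Ioc (0:ℝ) 1 ∪ Set.Icc 1 b))) := by
    refine IntegrableOn.union ?_ (IntegrableOn.union ?_ (IntegrableOn.union ?_ ?_))
    · exact logIntOn_away a (-1) (by intro h; simp at h; linarith [h.1, h.2])
    · exact logIntOn_neg (-1) le_rfl
    · exact logIntOn_pos 1 le_rfl
    · exact logIntOn_away 1 b (by intro h; simp at h; linarith [h.1])
  exact hI.mono_set hsub

lemma log_intervalIntegrable (a b : ℝ) : IntervalIntegrable Real.log volume a b :=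
  ⟨logIntOn a b, logIntOn b a⟩

lemma integral_log' (u : ℝ) : ∫ x in (0:ℝ)..u, Real.log x = u * Real.log u - u := by
  rcases le_or_gt 0 u with h | h
  · rw [intervalIntegral.integral_eq_sub_of_hasDeriv_right_of_le h
      (f := fun x => x * Real.log x - x) (f' := Real.log)
      ((Real.continuous_mul_log.sub continuous_id).continuousOn)
      (fun x hx => by
        have hx0 : x ≠ 0 := ne_of_gt hx.1
        have := (Real.hasDerivAt_mul_log hx0).sub (hasDerivAt_id x)
        exact this.hasDerivWithinAt.congr_deriv (by ring))
      (log_intervalIntegrable 0 u)]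
    simp
  · have : ∫ x in u..(0:ℝ), Real.log x = (0 * Real.log 0 - 0) - (u * Real.log u - u) := by
      apply intervalIntegral.integral_eq_sub_of_hasDeriv_right_of_le h.le
        (f := fun x => x * Real.log x - x)
        ((Real.continuous_mul_log.sub continuous_id).continuousOn)
        (fun x hx => by
          have hx0 : x ≠ 0 := ne_of_lt hx.2
          have := (Real.hasDerivAt_mul_log hx0).sub (hasDerivAt_id x)
          exact this.hasDerivWithinAt.congr_deriv (by ring))
        (log_intervalIntegrable u 0)
    have h2 := intervalIntegral.integral_symm (f := Real.log) (μ := volume) u 0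
    simp only [Real.log_zero] at this
    rw [this] at h2
    rw [h2]; ring

lemma logsub_intervalIntegrable (y a b : ℝ) :
    IntervalIntegrable (fun τ => Real.log (τ - y)) volume a b := by
  have h := (log_intervalIntegrable (a - y) (b - y)).comp_sub_right y
  simpa using h

lemma logsub_integrableOn {s : Set ℝ} (y a b : ℝ) (hs : s ⊆ Set.Ioc a b) :
    IntegrableOn (fun τ => Real.log (τ - y)) s := by
  rcases le_or_gt a b with h | h
  · exact ((intervalIntegrable_iff_integrableOn_Ioc_of_le h).mp
      (logsub_intervalIntegrable y a b)).mono_set hs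
  · rw [Set.Ioc_eq_empty (by intro hh; linarith)] at hs
    rw [Set.subset_empty_iff] at hs
    rw [hs]; exact integrableOn_empty

lemma integral_log_centered (y r : ℝ) (hr : 0 < r) :
    ∫ τ in Set.Ioo (y - r) (y + r), Real.log (τ - y) = 2*r*Real.log r - 2*r := by
  rw [← MeasureTheory.integral_Ioc_eq_integral_Ioo,
    ← intervalIntegral.integral_of_le (by linarith : y - r ≤ y + r)]
  rw [intervalIntegral.integral_comp_sub_right (fun t => Real.log t) y]
  have e1 : y - r - y = -r := by ring
  have e2 : y + r - y = r := by ring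
  rw [e1, e2]
  have hsplit := intervalIntegral.integral_add_adjacent_intervals
    (log_intervalIntegrable (-r) 0) (log_intervalIntegrable 0 r)
  have h1 : ∫ x in (-r:ℝ)..0, Real.log x = r * Real.log r - r := by
    have := intervalIntegral.integral_symm (f := Real.log) (μ := volume) (-r) 0
    rw [integral_log' (-r)] at this
    rw [Real.log_neg_eq_log] at this
    linarith
  rw [← hsplit, h1, integral_log' r]; ring

lemma setIntegral_log_ge (F : Set ℝ) (hFm : MeasurableSet F) (a b : ℝ) (hFb : F ⊆ Set.Ioc a b)
    (y : ℝ) (hL : 0 < (volume F).toReal) :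
    (volume F).toReal * (Real.log ((volume F).toReal / 2) - 1) ≤ ∫ τ in F, Real.log (τ - y) := by
  set L := (volume F).toReal with hLdef
  set r := L / 2 with hrdef
  have hr : 0 < r := by positivity
  set I := Set.Ioo (y - r) (y + r) with hIdef
  have hIm : MeasurableSet I := measurableSet_Ioo
  have hFfin : volume F ≠ ⊤ := by
    refine ne_top_of_le_ne_top ?_ (measure_mono hFb)
    exact measure_Ioc_lt_top.ne
  have hvolF : volume F = ENNReal.ofReal L := (ENNReal.ofReal_toReal hFfin).symm
  have hvolI : volume I = ENNReal.ofReal L := by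
    rw [hIdef, Real.volume_Ioo]; congr 1; ring
  have hIfin : volume I ≠ ⊤ := by rw [hvolI]; exact ENNReal.ofReal_ne_top
  set g : ℝ → ℝ := fun τ => Real.log (τ - y) with hg
  have hgF : IntegrableOn g F := logsub_integrableOn y a b hFb
  have hgI : IntegrableOn g I :=
    logsub_integrableOn y (y - r) (y + r) Set.Ioo_subset_Ioc_self
  -- measure equality of the two "crescents"
  have hdiffeq : volume (F \ I) = volume (I \ F) := by
    rw [measure_diff' _ hIm.nullMeasurableSet hIfin,
      measure_diff' _ hFm.nullMeasurableSet hFfin, Set.union_comm, hvolF, hvolI]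
  -- crescents have finite measure
  have hFIfin : volume (F \ I) ≠ ⊤ :=
    ne_top_of_le_ne_top hFfin (measure_mono Set.diff_subset)
  have hIFfin : volume (I \ F) ≠ ⊤ :=
    ne_top_of_le_ne_top hIfin (measure_mono Set.diff_subset)
  -- splitting
  have hFsplit : ∫ τ in F, g τ = (∫ τ in F \ I, g τ) + ∫ τ in F ∩ I, g τ := by
    rw [← MeasureTheory.setIntegral_union Set.disjoint_sdiff_inter (hFm.inter hIm)
      (hgF.mono_set Set.diff_subset) (hgF.mono_set Set.inter_subset_left),
      Set.diff_union_inter]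
  have hIsplit : ∫ τ in I, g τ = (∫ τ in I \ F, g τ) + ∫ τ in I ∩ F, g τ := by
    rw [← MeasureTheory.setIntegral_union Set.disjoint_sdiff_inter (hIm.inter hFm)
      (hgI.mono_set Set.diff_subset) (hgI.mono_set Set.inter_subset_left),
      Set.diff_union_inter]
  have hcomm : ∫ τ in I ∩ F, g τ = ∫ τ in F ∩ I, g τ := by rw [Set.inter_comm]
  -- lower bound on F \ I
  have hlow : Real.log r * (volume (F \ I)).toReal ≤ ∫ τ in F \ I, g τ := by
    refine setIntegral_ge_of_const_le_real (hFm.diff hIm) hFIfin ?_ (hgF.mono_set Set.diff_subset)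
    intro τ hτ
    have h1 : r ≤ |τ - y| := by
      rcases hτ.2 with h
      rw [hIdef, Set.mem_Ioo] at h
      push_neg at h
      rcases lt_or_ge (y - r) τ with h2 | h2
      · have := h h2
        rw [abs_of_nonneg (by linarith)]; linarith
      · rw [abs_of_nonpos (by linarith)]; linarith
    calc Real.log r ≤ Real.log |τ - y| := Real.log_le_log hr h1
    _ = g τ := by rw [hg]; simp [Real.log_abs]
  -- upper bound on I \ F
  have hup : ∫ τ in I \ F, g τ ≤ Real.log r * (volume (I \ F)).toReal := by
    have hae : (I \ F) \ ({y} : Set ℝ) =ᵐ[volume] (I \ F) := by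
      refine MeasureTheory.diff_null_ae_eq_self ?_
      exact measure_singleton y
    have hmes : volume ((I \ F) \ ({y} : Set ℝ)) = volume (I \ F) := measure_congr hae
    have key : (-Real.log r) * (volume ((I \ F) \ ({y} : Set ℝ))).toReal ≤ ∫ τ in (I \ F) \ ({y} : Set ℝ), (-g) τ := by
      refine setIntegral_ge_of_const_le_real ((hIm.diff hFm).diff (measurableSet_singleton y))
        (by rw [hmes]; exact hIFfin) ?_
        (((hgI.mono_set Set.diff_subset).mono_set Set.diff_subset).neg)
      intro τ hτ
      have hτI : τ ∈ I := hτ.1.1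
      have hτy : τ ≠ y := by
        intro hh; exact hτ.2 (by simp [hh])
      rw [hIdef, Set.mem_Ioo] at hτI
      have h0 : 0 < |τ - y| := abs_pos.mpr (sub_ne_zero.mpr hτy)
      have h1 : |τ - y| ≤ r := by
        rw [abs_le]; constructor <;> linarith [hτI.1, hτI.2]
      have : Real.log |τ - y| ≤ Real.log r := Real.log_le_log h0 h1
      rw [Real.log_abs] at this
      simp only [Pi.neg_apply, hg]
      linarith
    have e1 : ∫ τ in (I \ F) \ ({y} : Set ℝ), (-g) τ = - ∫ τ in I \ F, g τ := by
      exact (MeasureTheory.setIntegral_congr_set hae).trans (MeasureTheory.integral_neg g)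
    rw [e1, hmes] at key
    linarith
  -- conclude
  have hIint : ∫ τ in I, g τ = 2*r*Real.log r - 2*r := integral_log_centered y r hr
  have final : L * (Real.log r - 1) ≤ ∫ τ in F, g τ := by
    have htoReal : (volume (F \ I)).toReal = (volume (I \ F)).toReal := by rw [hdiffeq]
    have : (2:ℝ)*r*Real.log r - 2*r = L * (Real.log r - 1) := by rw [hrdef]; ring
    calc L * (Real.log r - 1) = ∫ τ in I, g τ := by rw [hIint, this]
    _ = (∫ τ in I \ F, g τ) + ∫ τ in F ∩ I, g τ := by rw [hIsplit, hcomm]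
    _ ≤ Real.log r * (volume (I \ F)).toReal + ∫ τ in F ∩ I, g τ := by linarith
    _ = Real.log r * (volume (F \ I)).toReal + ∫ τ in F ∩ I, g τ := by rw [htoReal]
    _ ≤ (∫ τ in F \ I, g τ) + ∫ τ in F ∩ I, g τ := by linarith
    _ = ∫ τ in F, g τ := hFsplit.symm
  exact final

lemma sublevel_measure (n : ℕ) (hn : 1 ≤ n) (x : Fin n → ℝ) (X : ℝ) (hX : 0 < X)
    (F : Set ℝ) (hFm : MeasurableSet F) (a b : ℝ) (hFb : F ⊆ Set.Ioc a b)
    (hF : ∀ τ ∈ F, (∏ i, |τ - x i|) ≤ X ^ n) :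
    volume F ≤ ENNReal.ofReal (2 * Real.exp 1 * X) := by
  have hFfin : volume F ≠ ⊤ :=
    ne_top_of_le_ne_top measure_Ioc_lt_top.ne (measure_mono hFb)
  set L := (volume F).toReal with hLdef
  have hvolF : volume F = ENNReal.ofReal L := (ENNReal.ofReal_toReal hFfin).symm
  rcases eq_or_lt_of_le (ENNReal.toReal_nonneg : 0 ≤ L) with hL0 | hL0
  · have hL0' : L = 0 := hL0.symm
    rw [hvolF, hL0']
    simp
  -- main case : L > 0
  set h : ℝ → ℝ := fun τ => ∑ i, Real.log (τ - x i) with hh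
  have hint : ∀ i : Fin n, IntegrableOn (fun τ => Real.log (τ - x i)) F :=
    fun i => logsub_integrableOn (x i) a b hFb
  have hhint : IntegrableOn h F := by
    rw [hh]
    exact MeasureTheory.integrable_finset_sum _ (fun i _ => hint i)
  -- lower bound
  have hlow : (n : ℝ) * (L * (Real.log (L / 2) - 1)) ≤ ∫ τ in F, h τ := by
    rw [hh, MeasureTheory.integral_finset_sum _ (fun i _ => hint i)]
    have : ∀ i : Fin n, L * (Real.log (L / 2) - 1) ≤ ∫ τ in F, Real.log (τ - x i) :=
      fun i => setIntegral_log_ge F hFm a b hFb (x i) hL0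
    calc (n : ℝ) * (L * (Real.log (L / 2) - 1))
        = ∑ _i : Fin n, L * (Real.log (L / 2) - 1) := by
          rw [Finset.sum_const, Finset.card_univ, Fintype.card_fin, nsmul_eq_mul]
    _ ≤ ∑ i : Fin n, ∫ τ in F, Real.log (τ - x i) := Finset.sum_le_sum (fun i _ => this i)
  -- upper bound
  have hnull : volume (⋃ i : Fin n, ({x i} : Set ℝ)) = 0 :=
    measure_iUnion_null (fun i => measure_singleton _)
  set F' := F \ (⋃ i : Fin n, ({x i} : Set ℝ)) with hF'
  have haeF : F' =ᵐ[volume] F := MeasureTheory.diff_null_ae_eq_self hnull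
  have hF'm : MeasurableSet F' := hFm.diff (MeasurableSet.iUnion (fun i => measurableSet_singleton _))
  have hF'vol : volume F' = volume F := measure_congr haeF
  have hup : ∫ τ in F, h τ ≤ ((n : ℝ) * Real.log X) * L := by
    have key : (-(((n : ℝ)) * Real.log X)) * (volume F').toReal ≤ ∫ τ in F', (-h) τ := by
      refine setIntegral_ge_of_const_le_real hF'm (by rw [hF'vol]; exact hFfin) ?_ ?_
      · intro τ hτ
        have hτF : τ ∈ F := hτ.1
        have hne : ∀ i : Fin n, τ - x i ≠ 0 := by
          intro i hcon
          exact hτ.2 (Set.mem_iUnion.mpr ⟨i, by simp [sub_eq_zero.mp hcon]⟩)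
        have hprodpos : 0 < ∏ i, |τ - x i| :=
          Finset.prod_pos (fun i _ => abs_pos.mpr (hne i))
        have hlogprod : Real.log (∏ i, |τ - x i|) ≤ Real.log (X ^ n) :=
          Real.log_le_log hprodpos (hF τ hτF)
        rw [Real.log_prod (fun i _ => (abs_pos.mpr (hne i)).ne'), Real.log_pow] at hlogprod
        simp only [Real.log_abs] at hlogprod
        simp only [Pi.neg_apply, hh]
        linarith
      · exact (hhint.mono_set Set.diff_subset).neg
    simp only [Pi.neg_apply] at key
    rw [MeasureTheory.integral_neg] at key
    rw [MeasureTheory.setIntegral_congr_set haeF, hF'vol, ← hLdef] at key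
    linarith
  -- combine
  have hn' : (0:ℝ) < n := by exact_mod_cast hn
  have hkey : Real.log (L / 2) - 1 ≤ Real.log X := by
    have hnL : 0 < (n:ℝ) * L := mul_pos hn' hL0
    have h2 : (n:ℝ) * L * (Real.log (L / 2) - 1) ≤ (n:ℝ) * L * Real.log X := by
      nlinarith [hlow.trans hup]
    exact le_of_mul_le_mul_left h2 hnL
  have hL2 : L / 2 ≤ Real.exp 1 * X := by
    have h1 : L / 2 = Real.exp (Real.log (L / 2)) := (Real.exp_log (by linarith)).symm
    have h2 : Real.exp (Real.log (L / 2)) ≤ Real.exp (1 + Real.log X) :=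
      Real.exp_le_exp.mpr (by linarith)
    rw [Real.exp_add, Real.exp_log hX] at h2
    linarith
  rw [hvolF]
  exact ENNReal.ofReal_le_ofReal (by linarith)

lemma poly_prod_bound (p : Polynomial ℝ) (hp : p ≠ 0) :
    ∃ x : Fin p.natDegree → ℝ, ∀ τ : ℝ,
      |p.leadingCoeff| * ∏ i, |τ - x i| ≤ |p.eval τ| := by
  set q := p.map (algebraMap ℝ ℂ) with hq
  have hq0 : q ≠ 0 := by
    rw [hq, Ne, Polynomial.map_eq_zero_iff (algebraMap ℝ ℂ).injective]
    exact hp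
  have hsplits : Splits q := IsAlgClosed.splits q
  have hcard : q.roots.card = q.natDegree := (splits_iff_card_roots).mp hsplits
  have hdeg : q.natDegree = p.natDegree := by
    rw [hq]; exact natDegree_map (algebraMap ℝ ℂ)
  set l := q.roots.toList with hl
  have hlen : l.length = p.natDegree := by
    rw [hl, Multiset.length_toList, hcard, hdeg]
  refine ⟨fun i => (l.get (Fin.cast hlen.symm i)).re, fun τ => ?_⟩
  have heval : q.eval (τ : ℂ) = ((p.eval τ : ℝ) : ℂ) := by
    rw [hq, Polynomial.eval_map, ← Complex.coe_algebraMap, Polynomial.eval₂_at_apply]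
  have hfac := hsplits.eq_prod_roots
  have habs : ‖q.eval (τ : ℂ)‖
      = ‖q.leadingCoeff‖ * ∏ i : Fin p.natDegree,
          ‖(τ : ℂ) - l.get (Fin.cast hlen.symm i)‖ := by
    conv_lhs => rw [hfac]
    rw [Polynomial.eval_mul, Polynomial.eval_C, norm_mul, Polynomial.eval_multiset_prod]
    congr 1
    rw [Multiset.map_map]
    have hroots : q.roots = (l : Multiset ℂ) := (Multiset.coe_toList _).symm
    rw [hroots, Multiset.map_coe, Multiset.prod_coe, List.norm_prod, List.map_map]
    have hofn : l = List.ofFn l.get := (List.ofFn_get l).symm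
    conv_lhs => rw [hofn, List.map_ofFn, List.prod_ofFn]
    rw [Fin.prod_congr' (fun j => ‖(τ:ℂ) - l.get j‖) hlen.symm]
    refine Finset.prod_congr rfl (fun i _ => ?_)
    simp
  have hlead : ‖q.leadingCoeff‖ = |p.leadingCoeff| := by
    rw [hq, Polynomial.leadingCoeff_map_of_injective (algebraMap ℝ ℂ).injective]
    exact (Complex.norm_real _).trans (Real.norm_eq_abs _)
  have hre : ∀ i : Fin p.natDegree,
      |τ - (l.get (Fin.cast hlen.symm i)).re| ≤ ‖(τ : ℂ) - l.get (Fin.cast hlen.symm i)‖ := by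
    intro i
    have := Complex.abs_re_le_norm ((τ : ℂ) - l.get (Fin.cast hlen.symm i))
    simpa [Complex.sub_re, Complex.ofReal_re] using this
  have hprodle : ∏ i : Fin p.natDegree, |τ - (l.get (Fin.cast hlen.symm i)).re|
      ≤ ∏ i : Fin p.natDegree, ‖(τ : ℂ) - l.get (Fin.cast hlen.symm i)‖ :=
    Finset.prod_le_prod (fun i _ => abs_nonneg _) (fun i _ => hre i)
  have hfinal : |p.eval τ| = ‖q.leadingCoeff‖ * ∏ i : Fin p.natDegree,
      ‖(τ : ℂ) - l.get (Fin.cast hlen.symm i)‖ := by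
    rw [← habs, heval, Complex.norm_real, Real.norm_eq_abs]
  rw [hfinal, hlead]
  exact mul_le_mul_of_nonneg_left hprodle (abs_nonneg _)

noncomputable def kp (a b c d : ℕ → ℝ) : ℕ → (Polynomial ℝ × Polynomial ℝ × Polynomial ℝ × Polynomial ℝ)
  | 0 => (1, 0, 0, 1)
  | k + 1 =>
    let p := kp a b c d k
    (Polynomial.C (a (k+1)) * (p.1 + Polynomial.X * p.2.2.1) + Polynomial.C (b (k+1)) * p.2.2.1,
     Polynomial.C (a (k+1)) * (p.2.1 + Polynomial.X * p.2.2.2) + Polynomial.C (b (k+1)) * p.2.2.2,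
     Polynomial.C (c (k+1)) * (p.1 + Polynomial.X * p.2.2.1) + Polynomial.C (d (k+1)) * p.2.2.1,
     Polynomial.C (c (k+1)) * (p.2.1 + Polynomial.X * p.2.2.2) + Polynomial.C (d (k+1)) * p.2.2.2)

lemma kp_eval (a b c d : ℕ → ℝ) (φ : ℕ → Matrix (Fin 2) (Fin 2) ℝ)
    (hφ : ∀ i : ℕ, 1 ≤ i → φ i = !![a i, b i; c i, d i]) (τ : ℝ) :
    ∀ k : ℕ, kickedEvol φ τ k =
      !![(kp a b c d k).1.eval τ, (kp a b c d k).2.1.eval τ;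
         (kp a b c d k).2.2.1.eval τ, (kp a b c d k).2.2.2.eval τ] := by
  intro k
  induction k with
  | zero =>
    simp [kickedEvol, kp, Matrix.one_fin_two]
  | succ k ih =>
    rw [kickedEvol, ih, hφ (k+1) (Nat.succ_le_succ (Nat.zero_le k)), hMat]
    rw [Matrix.mul_fin_two, Matrix.mul_fin_two]
    show _ = !![(kp a b c d (k+1)).1.eval τ, _; _, _]
    rw [kp]
    simp only [Polynomial.eval_add, Polynomial.eval_mul, Polynomial.eval_C, Polynomial.eval_X]
    norm_num
    refine ⟨⟨?_, ?_⟩, ?_, ?_⟩ <;> ring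

lemma kp_coeff (a b c d : ℕ → ℝ) : ∀ k : ℕ, 1 ≤ k →
    (∀ j, k ≤ j → (kp a b c d k).1.coeff j = 0) ∧
    (∀ j, k ≤ j → (kp a b c d k).2.2.1.coeff j = 0) ∧
    (∀ j, k < j → (kp a b c d k).2.1.coeff j = 0) ∧
    (∀ j, k < j → (kp a b c d k).2.2.2.coeff j = 0) ∧
    (kp a b c d k).2.2.2.coeff k = ∏ i ∈ Finset.Icc 1 k, c i := by
  intro k hk
  induction k, hk using Nat.le_induction with
  | base =>
    have h0 : kp a b c d 0 = (1, 0, 0, 1) := rfl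
    refine ⟨?_, ?_, ?_, ?_, ?_⟩
    · intro j hj
      rw [kp, h0]
      simp only
      rcases Nat.exists_eq_add_of_le hj with ⟨j', rfl⟩
      simp [Polynomial.coeff_C, Nat.add_eq_zero]
    · intro j hj
      rw [kp, h0]
      simp only
      rcases Nat.exists_eq_add_of_le hj with ⟨j', rfl⟩
      simp [Polynomial.coeff_C, Nat.add_eq_zero]
    · intro j hj
      rw [kp, h0]
      simp only
      simp only [Polynomial.coeff_add, Polynomial.coeff_C_mul, Polynomial.coeff_C,
        Polynomial.coeff_X, mul_zero, zero_mul, mul_one, add_zero, zero_add, mul_ite, ite_mul]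
      rw [if_neg (by omega : ¬ (1 = j)), if_neg (by omega : ¬ (j = 0))]
      ring
    · intro j hj
      rw [kp, h0]
      simp only
      simp only [Polynomial.coeff_add, Polynomial.coeff_C_mul, Polynomial.coeff_C,
        Polynomial.coeff_X, mul_zero, zero_mul, mul_one, add_zero, zero_add, mul_ite, ite_mul]
      rw [if_neg (by omega : ¬ (1 = j)), if_neg (by omega : ¬ (j = 0))]
      ring
    · rw [kp, h0]
      simp [Polynomial.coeff_C, Polynomial.coeff_X]
  | succ k hk ih =>
    obtain ⟨hA, hC, hB, hD, hDlead⟩ := ih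
    refine ⟨?_, ?_, ?_, ?_, ?_⟩
    · intro j hj
      rcases Nat.exists_eq_add_of_le hj with ⟨j', rfl⟩
      rw [kp]
      simp only [Polynomial.coeff_add, Polynomial.coeff_C_mul]
      rw [(by omega : k + 1 + j' = (k + j') + 1), Polynomial.coeff_X_mul]
      rw [hA _ (by omega), hC _ (by omega), hC _ (by omega)]
      ring
    · intro j hj
      rcases Nat.exists_eq_add_of_le hj with ⟨j', rfl⟩
      rw [kp]
      simp only [Polynomial.coeff_add, Polynomial.coeff_C_mul]
      rw [(by omega : k + 1 + j' = (k + j') + 1), Polynomial.coeff_X_mul]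
      rw [hA _ (by omega), hC _ (by omega), hC _ (by omega)]
      ring
    · intro j hj
      rcases Nat.exists_eq_add_of_le (by omega : k + 2 ≤ j) with ⟨j', rfl⟩
      rw [kp]
      simp only [Polynomial.coeff_add, Polynomial.coeff_C_mul]
      rw [(by omega : k + 2 + j' = (k + 1 + j') + 1), Polynomial.coeff_X_mul]
      rw [hB _ (by omega), hD _ (by omega), hD _ (by omega)]
      ring
    · intro j hj
      rcases Nat.exists_eq_add_of_le (by omega : k + 2 ≤ j) with ⟨j', rfl⟩
      rw [kp]
      simp only [Polynomial.coeff_add, Polynomial.coeff_C_mul]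
      rw [(by omega : k + 2 + j' = (k + 1 + j') + 1), Polynomial.coeff_X_mul]
      rw [hB _ (by omega), hD _ (by omega), hD _ (by omega)]
      ring
    · rw [kp]
      simp only [Polynomial.coeff_add, Polynomial.coeff_C_mul]
      rw [Polynomial.coeff_X_mul]
      rw [hB _ (by omega), hDlead, hD _ (by omega)]
      rw [Finset.prod_Icc_succ_top (by omega : 1 ≤ k + 1)]
      ring

lemma poly_sublevel (p : Polynomial ℝ) (hn : 1 ≤ p.natDegree) (M : ℝ) (hM : 1 ≤ M) (T : ℝ) :
    volume ({τ : ℝ | |p.eval τ| ≤ M} ∩ Set.Ioc 0 T)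
      ≤ ENNReal.ofReal (2 * Real.exp 1 *
          Real.exp ((Real.log M - Real.log |p.leadingCoeff|) / p.natDegree)) := by
  have hp0 : p ≠ 0 := fun h => by simp [h] at hn
  have hlead : 0 < |p.leadingCoeff| := abs_pos.mpr (leadingCoeff_ne_zero.mpr hp0)
  obtain ⟨x, hx⟩ := poly_prod_bound p hp0
  set X := Real.exp ((Real.log M - Real.log |p.leadingCoeff|) / p.natDegree) with hXdef
  have hX : 0 < X := Real.exp_pos _
  have hn' : (0:ℝ) < p.natDegree := by exact_mod_cast hn
  have hXn : X ^ p.natDegree = M / |p.leadingCoeff| := by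
    rw [hXdef, ← Real.exp_nat_mul]
    rw [mul_div_cancel₀ _ (ne_of_gt hn')]
    rw [Real.exp_sub, Real.exp_log (by linarith : (0:ℝ) < M), Real.exp_log hlead]
  have hFm : MeasurableSet ({τ : ℝ | |p.eval τ| ≤ M} ∩ Set.Ioc 0 T) := by
    refine MeasurableSet.inter ?_ measurableSet_Ioc
    exact measurableSet_le (p.continuous.abs.measurable) measurable_const
  refine sublevel_measure p.natDegree hn x X hX _ hFm 0 T Set.inter_subset_right ?_
  intro τ hτ
  have h1 := hx τ
  have h2 : |p.eval τ| ≤ M := hτ.1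
  rw [hXn, le_div_iff₀ hlead, mul_comm]
  linarith

end Aux


/-- if the kicks `φ_i = [[a_i, b_i],[c_i, d_i]] ∈ SL(2,ℝ)` have `c_i ≠ 0`
and the averages `(1/n) ∑_{i=1}^n log |c_i|` are bounded below, then the set of periods
`τ > 0` for which the kicked evolution is bounded has finite Lebesgue measure. -/
theorem stmt_10 (a b c d : ℕ → ℝ)
    (hdet : ∀ i : ℕ, 1 ≤ i → a i * d i - b i * c i = 1)
    (hc : ∀ i : ℕ, 1 ≤ i → c i ≠ 0)
    (hlog : ∃ m : ℝ, ∀ n : ℕ, 1 ≤ n →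
      m ≤ (1 / (n : ℝ)) * ∑ i ∈ Finset.Icc 1 n, Real.log |c i|)
    (φ : ℕ → Matrix (Fin 2) (Fin 2) ℝ)
    (hφ : ∀ i : ℕ, 1 ≤ i → φ i = !![a i, b i; c i, d i]) :
    volume {τ : ℝ | τ ∈ Set.Ioi (0 : ℝ) ∧ MatSeqBounded (kickedEvol φ τ)} < ⊤ := by
  classical
  obtain ⟨m, hm⟩ := hlog
  set P : ℕ → Polynomial ℝ := fun k => (kp a b c d k).2.2.2 with hP
  have hPev : ∀ (τ : ℝ) (k : ℕ), kickedEvol φ τ k 1 1 = (P k).eval τ := by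
    intro τ k
    rw [kp_eval a b c d φ hφ τ k]
    simp [hP]
  have hfacts : ∀ k : ℕ, 1 ≤ k →
      (P k).natDegree = k ∧ (P k).leadingCoeff = ∏ i ∈ Finset.Icc 1 k, c i := by
    intro k hk
    obtain ⟨hA, hC, hB, hD, hDlead⟩ := kp_coeff a b c d k hk
    have hprod : (∏ i ∈ Finset.Icc 1 k, c i) ≠ 0 := by
      rw [Finset.prod_ne_zero_iff]
      intro i hi
      exact hc i (Finset.mem_Icc.mp hi).1
    have hcoeffne : (P k).coeff k ≠ 0 := by rw [hP]; simp only; rw [hDlead]; exact hprod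
    have hle : (P k).natDegree ≤ k :=
      Polynomial.natDegree_le_iff_coeff_eq_zero.mpr (fun N hN => hD N hN)
    have hge : k ≤ (P k).natDegree := Polynomial.le_natDegree_of_ne_zero hcoeffne
    have hdeg : (P k).natDegree = k := le_antisymm hle hge
    refine ⟨hdeg, ?_⟩
    rw [Polynomial.leadingCoeff, hdeg]
    exact hDlead
  have hloglead : ∀ k : ℕ, 1 ≤ k → (k:ℝ) * m ≤ Real.log |(P k).leadingCoeff| := by
    intro k hk
    rw [(hfacts k hk).2, Finset.abs_prod, Real.log_prod
      (fun i hi => abs_ne_zero.mpr (hc i (Finset.mem_Icc.mp hi).1))]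
    have hk' : (0:ℝ) < k := by exact_mod_cast hk
    calc (k:ℝ)*m ≤ (k:ℝ) * ((1/(k:ℝ)) * ∑ i ∈ Finset.Icc 1 k, Real.log |c i|) :=
      mul_le_mul_of_nonneg_left (hm k hk) hk'.le
    _ = ∑ i ∈ Finset.Icc 1 k, Real.log |c i| := by field_simp
  set K := 2 * Real.exp 1 * Real.exp (1 - m) with hK
  -- the measurable supersets
  set G : ℕ → Set ℝ :=
    fun N => (⋂ k : ℕ, {τ : ℝ | |(P k).eval τ| ≤ (N:ℝ)}) ∩ Set.Ioc (0:ℝ) (N:ℝ) with hG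
  have hGbound : ∀ N : ℕ, volume (G N) ≤ ENNReal.ofReal K := by
    intro N
    rcases Nat.eq_zero_or_pos N with h0 | hN
    · have : G N ⊆ (∅ : Set ℝ) := by
        rw [hG, h0]
        intro τ hτ
        have h1 : (0:ℝ) < τ := hτ.2.1
        have h2 : τ ≤ ((0:ℕ):ℝ) := hτ.2.2
        norm_num at h2
        linarith
      refine le_trans (measure_mono (μ := volume) this) ?_
      simp
    -- main case
    set n := max 1 ⌈Real.log N⌉₊ with hn
    have hn1 : 1 ≤ n := le_max_left _ _
    have hdeg := (hfacts n hn1).1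
    have hN1 : (1:ℝ) ≤ (N:ℝ) := by exact_mod_cast hN
    have hsub : G N ⊆ {τ : ℝ | |(P n).eval τ| ≤ (N:ℝ)} ∩ Set.Ioc (0:ℝ) (N:ℝ) := by
      intro τ hτ
      exact ⟨Set.mem_iInter.mp hτ.1 n, hτ.2⟩
    refine (measure_mono hsub).trans ?_
    have hb := poly_sublevel (P n) (by rw [hdeg]; exact hn1) (N:ℝ) hN1 (N:ℝ)
    refine hb.trans (ENNReal.ofReal_le_ofReal ?_)
    have hnn : (0:ℝ) < n := by exact_mod_cast hn1
    have hlogN : Real.log N ≤ (n:ℝ) := by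
      refine (Nat.le_ceil _).trans ?_
      exact_mod_cast le_max_right 1 ⌈Real.log N⌉₊
    have h2 := hloglead n hn1
    have hexp : (Real.log N - Real.log |(P n).leadingCoeff|) / (P n).natDegree ≤ 1 - m := by
      rw [hdeg, div_le_iff₀ hnn]
      nlinarith
    rw [hK]
    have := Real.exp_le_exp.mpr hexp
    nlinarith [Real.exp_pos (1:ℝ), this, Real.exp_pos ((Real.log N - Real.log |(P n).leadingCoeff|) / (P n).natDegree)]
  have hGmono : Monotone G := by
    intro N N' hNN
    rw [hG]
    refine Set.inter_subset_inter ?_ ?_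
    · refine Set.iInter_mono (fun k => ?_)
      intro τ hτ
      simp only [Set.mem_setOf_eq] at hτ ⊢
      exact le_trans hτ (by exact_mod_cast hNN)
    · exact Set.Ioc_subset_Ioc le_rfl (by exact_mod_cast hNN)
  have hunion : volume (⋃ N : ℕ, G N) ≤ ENNReal.ofReal K := by
    rw [hGmono.directed_le.measure_iUnion]
    exact iSup_le hGbound
  have hincl : {τ : ℝ | τ ∈ Set.Ioi (0 : ℝ) ∧ MatSeqBounded (kickedEvol φ τ)} ⊆ ⋃ N : ℕ, G N := by
    rintro τ ⟨hτpos, C, hC⟩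
    rw [Set.mem_Ioi] at hτpos
    set N := ⌈max C τ⌉₊ + 1 with hNdef
    have hCN : C ≤ (N:ℝ) := by
      refine le_trans (le_max_left C τ) ((Nat.le_ceil _).trans ?_)
      exact_mod_cast Nat.le_succ _
    have hτN : τ ≤ (N:ℝ) := by
      refine le_trans (le_max_right C τ) ((Nat.le_ceil _).trans ?_)
      exact_mod_cast Nat.le_succ _
    have hN1 : (1:ℝ) ≤ (N:ℝ) := by
      have : 1 ≤ N := Nat.succ_le_succ (Nat.zero_le _)
      exact_mod_cast this
    refine Set.mem_iUnion.mpr ⟨N, ?_, hτpos, hτN⟩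
    refine Set.mem_iInter.mpr (fun k => ?_)
    rcases Nat.eq_zero_or_pos k with hk0 | hk1
    · rw [hk0]
      have : (P 0).eval τ = 1 := by rw [hP]; simp [kp]
      rw [Set.mem_setOf_eq, this]
      rw [abs_one]
      exact hN1
    · have := hC k hk1 1 1
      rw [hPev τ k] at this
      exact le_trans this hCN
  calc volume {τ : ℝ | τ ∈ Set.Ioi (0 : ℝ) ∧ MatSeqBounded (kickedEvol φ τ)}
      ≤ volume (⋃ N : ℕ, G N) := measure_mono hincl
  _ ≤ ENNReal.ofReal K := hunion
  _ < ⊤ := ENNReal.ofReal_lt_top
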